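/- (Core step of Theorem on strong inducibility.) Let $u^L \in \mathbb{R}^{m\times n}$ and suppose $(\mathbf{x}^*,j)$ satisfies $u^L(\mathbf{x}^*,j) \geq M$ (maximin), $U_j(\mathbf{x}^*) \neq \emptyset$, and let $\delta > 0$ and $\mathbf{x}$ be a vertex of the polytope $P_\delta = \{\mathbf{y} \in \Delta^{m-1} : u^L(\mathbf{y},j) = u^L(\mathbf{x}^*,j) + \delta\}$, with $\delta$ maximal subject to $P_\delta \neq \emptyset$ under the given constraints. Let $B = \{i : \mathbf{e}_i \cdot \mathbf{x} = \beta_i\}$ (tight simplex boundary constraints at $\mathbf{x}$, nonempty since $\mathbf{x}$ is a vertex of $P_\delta$), $\mathbf{h} = \sum_{i \in B} \mathbf{e}_i$, $k \in \arg\min_{\ell \neq j} u^L(\mathbf{x},\ell)$, and $\alpha = (2\max_{i,\ell}|u^L(i,\ell)| + m)/\delta$. Define $\tilde{u}^F(\mathbf{y},\ell) = -u^L(\mathbf{y},\ell)$ for $\ell \neq j$ and $\tilde{u}^F(\mathbf{y},j) = -u^L(\mathbf{y},k) + \alpha(u^L(\mathbf{x},j)-u^L(\mathbf{y},j)) - \mathbf{h}\cdot(\mathbf{y}-\mathbf{x})$.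 Then $(\mathbf{x},j)$ is the unique SSE of $(u^L,\tilde{u}^F)$. -/
import Mathlib


open Finset

noncomputable section

def simplex (m : ℕ) : Set (Fin m → ℝ) := stdSimplex ℝ (Fin m)

def util {m n : ℕ} (u : Fin m → Fin n → ℝ) (y : Fin m → ℝ) (j : Fin n) : ℝ :=
  ∑ i, y i * u i j

/-- `(x, j)` is a strong Stackelberg equilibrium of the game with leader matrix `uL` and
a follower utility function `v` (affine in the leader's mixed strategy, hence arising
from a payoff matrix). -/
def SSEf {m n : ℕ} (uL : Fin m → Fin n → ℝ) (v : (Fin m → ℝ) → Fin n → ℝ)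
    (x : Fin m → ℝ) (j : Fin n) : Prop :=
  x ∈ simplex m ∧ (∀ ℓ, v x ℓ ≤ v x j) ∧
    ∀ y ∈ simplex m, ∀ ℓ, (∀ k, v y k ≤ v y ℓ) → util uL y ℓ ≤ util uL x j

/-- Core step of the strong inducibility theorem: the constructed matrix strongly
induces `(x, j)`, i.e. `(x, j)` is the unique SSE of the resulting game. -/
theorem stmt_19 (m n : ℕ) (hm : 1 ≤ m) (hn : 2 ≤ n) (uL : Fin m → Fin n → ℝ)
    (xstar : Fin m → ℝ) (hxstar : xstar ∈ simplex m) (j : Fin n)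
    -- u^L(x*, j) ≥ M (maximin)
    (hM : ∀ y ∈ simplex m, ∃ ℓ, util uL y ℓ ≤ util uL xstar j)
    -- U_j(x*) ≠ ∅
    (hU : ∃ y ∈ simplex m, util uL xstar j < util uL y j)
    -- Lemma M–V: u^L(x*, j) ≥ min_{ℓ ≠ j} u^L(y, ℓ) for y ∈ closure U_j(x*)
    (hMV : ∀ y ∈ closure {z | z ∈ simplex m ∧ util uL xstar j < util uL z j},
      ∃ ℓ, ℓ ≠ j ∧ util uL y ℓ ≤ util uL xstar j)
    (δ : ℝ) (hδ : 0 < δ)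
    -- x is a point of P_δ
    (x : Fin m → ℝ) (hx : x ∈ simplex m)
    (hxP : util uL x j = util uL xstar j + δ)
    -- B: tight simplex boundary constraints at x, nonempty since x is a vertex of P_δ
    (B : Finset (Fin m)) (hB : ∀ i, i ∈ B ↔ x i = 0) (hBne : B.Nonempty)
    -- x is a vertex of P_δ: h·(y − x) > 0 for every other point y of P_δ
    (hvertex : ∀ y ∈ simplex m, util uL y j = util uL xstar j + δ → y ≠ x →
      0 < ∑ i ∈ B, (y i - x i))
    (k : Fin n) (hkj : k ≠ j) (hk : ∀ ℓ, ℓ ≠ j → util uL x k ≤ util uL x ℓ)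
    -- C = max_{i,ℓ} |u^L(i,ℓ)| and α = (2C + m)/δ
    (C : ℝ) (hC : IsGreatest {t | ∃ i ℓ, t = |uL i ℓ|} C)
    (α : ℝ) (hα : α = (2 * C + m) / δ)
    (v : (Fin m → ℝ) → Fin n → ℝ)
    (hv : ∀ y ℓ, v y ℓ = if ℓ = j then
        -util uL y k + α * (util uL x j - util uL y j) - ∑ i ∈ B, (y i - x i)
      else -util uL y ℓ) :
    SSEf uL v x j ∧ ∀ y ℓ, SSEf uL v y ℓ → y = x ∧ ℓ = j := by
  have hm1 : (1:ℝ) ≤ m := by exact_mod_cast hm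
  have hC0 : 0 ≤ C := by obtain ⟨i, ℓ, h⟩ := hC.1; rw [h]; exact abs_nonneg _
  have habs : ∀ y ∈ simplex m, ∀ ℓ, |util uL y ℓ| ≤ C := by
    intro y hy ℓ
    calc |∑ i, y i * uL i ℓ| ≤ ∑ i, |y i * uL i ℓ| := Finset.abs_sum_le_sum_abs _ _
      _ ≤ ∑ i, y i * C := by
          apply Finset.sum_le_sum; intro i _
          rw [abs_mul, abs_of_nonneg (hy.1 i)]
          exact mul_le_mul_of_nonneg_left (hC.2 ⟨i, ℓ, rfl⟩) (hy.1 i)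
      _ = C := by rw [← Finset.sum_mul, hy.2, one_mul]
  have hαδ : α * δ = 2*C + m := by rw [hα]; field_simp
  have hαpos : 0 < α := by
    rw [hα]; apply div_pos _ hδ; linarith
  have hsumB : ∀ y : Fin m → ℝ, ∑ i ∈ B, (y i - x i) = ∑ i ∈ B, y i := by
    intro y; apply Finset.sum_congr rfl; intro i hi; rw [(hB i).1 hi]; ring
  have hsumBnn : ∀ y ∈ simplex m, 0 ≤ ∑ i ∈ B, y i :=
    fun y hy => Finset.sum_nonneg fun i _ => hy.1 i
  have hsumBle : ∀ y ∈ simplex m, ∑ i ∈ B, y i ≤ m := by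
    intro y hy
    calc ∑ i ∈ B, y i ≤ ∑ i, y i :=
          Finset.sum_le_sum_of_subset_of_nonneg (Finset.subset_univ B) (fun i _ _ => hy.1 i)
      _ = 1 := hy.2
      _ ≤ m := hm1
  have hvne : ∀ y ℓ, ℓ ≠ j → v y ℓ = -util uL y ℓ := fun y ℓ h => by rw [hv, if_neg h]
  have hvj : ∀ y, v y j = -util uL y k + α * (util uL x j - util uL y j) - ∑ i ∈ B, y i := by
    intro y; rw [hv, if_pos rfl, hsumB y]
  have hvxj : v x j = -util uL x k := by
    rw [hvj x]
    have : ∑ i ∈ B, x i = 0 := Finset.sum_eq_zero fun i hi => (hB i).1 hi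
    rw [this]; ring
  -- j is a best response at x
  have hBRx : ∀ ℓ, v x ℓ ≤ v x j := by
    intro ℓ
    by_cases hℓ : ℓ = j
    · subst hℓ; exact le_refl _
    · rw [hvne x ℓ hℓ, hvxj]
      have := hk ℓ hℓ
      linarith
  -- key optimality claim
  have key : ∀ y ∈ simplex m, ∀ ℓ, (∀ k', v y k' ≤ v y ℓ) → util uL y ℓ ≤ util uL x j := by
    intro y hy ℓ hBR
    by_cases hℓj : ℓ = j
    · subst hℓj
      have h1 := hBR k
      rw [hvne y k hkj, hvj y] at h1
      have h2 := hsumBnn y hy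
      nlinarith
    · by_cases hyj : util uL xstar j < util uL y j
      · obtain ⟨ℓ', hℓ'j, hℓ'⟩ := hMV y (subset_closure ⟨hy, hyj⟩)
        have h1 := hBR ℓ'
        rw [hvne y ℓ' hℓ'j, hvne y ℓ hℓj] at h1
        linarith
      · push_neg at hyj
        have h1 := hBR j
        rw [hvne y ℓ hℓj, hvj y] at h1
        have h2 : util uL y k ≤ C := le_of_abs_le (habs y hy k)
        have h3 := hsumBle y hy
        have h4 : -C ≤ util uL x j := neg_le_of_abs_le (habs x hx j)
        have h5 : α * δ ≤ α * (util uL x j - util uL y j) := by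
          apply mul_le_mul_of_nonneg_left _ hαpos.le
          linarith
        linarith
  refine ⟨⟨hx, hBRx, key⟩, ?_⟩
  rintro y ℓ ⟨hy, hBRy, hopt⟩
  have h1 : util uL x j ≤ util uL y ℓ := hopt x hx j hBRx
  have heq : util uL y ℓ = util uL x j := le_antisymm (key y hy ℓ hBRy) h1
  have hℓj : ℓ = j := by
    by_contra hℓj
    by_cases hyj : util uL xstar j < util uL y j
    · obtain ⟨ℓ', hℓ'j, hℓ'⟩ := hMV y (subset_closure ⟨hy, hyj⟩)
      have hb := hBRy ℓ'
      rw [hvne y ℓ' hℓ'j, hvne y ℓ hℓj] at hb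
      linarith
    · push_neg at hyj
      have hb := hBRy j
      rw [hvne y ℓ hℓj, hvj y] at hb
      have h2 : util uL y k ≤ C := le_of_abs_le (habs y hy k)
      have h3 := hsumBle y hy
      have h4 : -C ≤ util uL xstar j := neg_le_of_abs_le (habs xstar hxstar j)
      have h5 : α * δ ≤ α * (util uL x j - util uL y j) := by
        apply mul_le_mul_of_nonneg_left _ hαpos.le
        linarith
      linarith
  subst hℓj
  refine ⟨?_, rfl⟩
  by_contra hne
  have hv0 := hvertex y hy (by linarith) hne
  rw [hsumB y] at hv0
  have hb := hBRy k
  rw [hvne y k hkj, hvj y] at hb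
  have : util uL x ℓ - util uL y ℓ = 0 := by linarith
  rw [this] at hb
  nlinarith
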